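/- Under the modified overparametrized gradient flow with maximal rank along the orbit, x[Z(s)] - y = e^{-s/N}(x[Z(0)] - y) for all s ≥ 0; hence x[Z(s)] → y as s → ∞. -/

import Mathlib

open Matrix

lemma toEuclideanLin_comp_apply {m n k : ℕ} (A : Matrix (Fin m) (Fin n) ℝ)
    (B : Matrix (Fin n) (Fin k) ℝ) (v : EuclideanSpace ℝ (Fin k)) :
    Matrix.toEuclideanLin A (Matrix.toEuclideanLin B v) =
      Matrix.toEuclideanLin (A * B) v := by
  simp [Matrix.toEuclideanLin_apply, Matrix.mulVec_mulVec]

lemma rank_eq_card_isUnit {n : ℕ} (M : Matrix (Fin n) (Fin n) ℝ)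
    (h : M.rank = n) : IsUnit M := by
  rw [← Matrix.mulVec_surjective_iff_isUnit]
  have hrange : LinearMap.range M.mulVecLin = ⊤ := by
    apply Submodule.eq_top_of_finrank_eq
    rw [← Matrix.rank, h]
    simp [Module.finrank_pi]
  intro w
  have := hrange ▸ Submodule.mem_top (x := w) (R := ℝ)
  obtain ⟨v, hv⟩ := this
  exact ⟨v, hv⟩

theorem overparam_flow_output_convergence
    (n K : ℕ) (hnK : n ≤ K) (N : ℝ) (hN : 0 < N) (y : EuclideanSpace ℝ (Fin n))
    (x : EuclideanSpace ℝ (Fin K) → EuclideanSpace ℝ (Fin n))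
    (D : EuclideanSpace ℝ (Fin K) → Matrix (Fin n) (Fin K) ℝ)
    (hx : ∀ W, HasFDerivAt x (LinearMap.toContinuousLinearMap (Matrix.toEuclideanLin (D W))) W)
    (Z : ℝ → EuclideanSpace ℝ (Fin K))
    (hrank : ∀ s : ℝ, (D (Z s)).rank = n)
    (hode : ∀ s : ℝ, HasDerivAt Z
      (-(Matrix.toEuclideanLin ((D (Z s))ᵀ * (D (Z s) * (D (Z s))ᵀ)⁻¹)
        ((1 / N) • (x (Z s) - y)))) s) :
    (∀ s : ℝ, 0 ≤ s → x (Z s) - y = Real.exp (-s / N) • (x (Z 0) - y)) ∧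
      Filter.Tendsto (fun s => x (Z s)) Filter.atTop (nhds y) := by
  set u : ℝ → EuclideanSpace ℝ (Fin n) := fun s => x (Z s) - y with hu_def
  -- D * Dᵀ is invertible
  have hunit : ∀ s, IsUnit (D (Z s) * (D (Z s))ᵀ) := by
    intro s
    apply rank_eq_card_isUnit
    rw [Matrix.rank_self_mul_transpose, hrank]
  -- derivative of u
  have hu : ∀ s, HasDerivAt u (-(1 / N) • u s) s := by
    intro s
    have h := ((hx (Z s)).comp_hasDerivAt s (hode s)).sub_const y
    convert h using 1
    case e'_4 => rfl
    case e'_5 => rfl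
    case e'_6 => rfl
    case e'_8 => rfl
    have hDD : D (Z s) * ((D (Z s))ᵀ * (D (Z s) * (D (Z s))ᵀ)⁻¹) = 1 := by
      rw [← Matrix.mul_assoc]
      exact Matrix.mul_nonsing_inv _ ((Matrix.isUnit_iff_isUnit_det _).mp (hunit s))
    rw [LinearMap.coe_toContinuousLinearMap', map_neg, toEuclideanLin_comp_apply, hDD]
    simp [Matrix.toEuclideanLin_apply, Matrix.one_mulVec, neg_smul, hu_def]
  -- e^{s/N} u s is constant
  have hc : ∀ s : ℝ, HasDerivAt (fun s => Real.exp (s / N)) (Real.exp (s / N) * (1 / N)) s := by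
    intro s
    simpa [div_eq_mul_inv, one_div] using ((hasDerivAt_id s).div_const N).exp
  have hv : ∀ s : ℝ, HasDerivAt (fun s => Real.exp (s / N) • u s) 0 s := by
    intro s
    have h := (hc s).smul (hu s)
    convert h using 1
    case e'_4 => rfl
    case e'_5 => rfl
    case e'_6 => rfl
    case e'_8 => rfl
    rw [smul_smul, ← add_smul]
    have : Real.exp (s / N) * -(1 / N) + Real.exp (s / N) * (1 / N) = 0 := by ring
    rw [this, zero_smul]
  have hconst : ∀ s : ℝ, Real.exp (s / N) • u s = u 0 := by
    intro s
    have hdiff : Differentiable ℝ (fun s => Real.exp (s / N) • u s) :=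
      fun t => (hv t).differentiableAt
    have hfz : ∀ t : ℝ, fderiv ℝ (fun s => Real.exp (s / N) • u s) t = 0 := by
      intro t
      have := ((hv t).hasFDerivAt).fderiv
      rw [this]
      ext w
      simp
    have := is_const_of_fderiv_eq_zero hdiff hfz s 0
    simpa using this
  have hformula : ∀ s : ℝ, u s = Real.exp (-s / N) • u 0 := by
    intro s
    rw [← hconst s, smul_smul, ← Real.exp_add]
    have : -s / N + s / N = 0 := by ring
    rw [this, Real.exp_zero, one_smul]
  refine ⟨fun s _ => hformula s, ?_⟩
  have hexp : Filter.Tendsto (fun s : ℝ => Real.exp (-s / N)) Filter.atTop (nhds 0) := by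
    apply Real.tendsto_exp_atBot.comp
    have h1 : Filter.Tendsto (fun s : ℝ => s / N) Filter.atTop Filter.atTop :=
      Filter.Tendsto.atTop_div_const hN Filter.tendsto_id
    simpa [neg_div] using (Filter.tendsto_neg_atBot_iff.mpr h1)
  have h2 : Filter.Tendsto (fun s : ℝ => Real.exp (-s / N) • u 0 + y) Filter.atTop (nhds y) := by
    have := hexp.smul_const (u 0)
    rw [zero_smul] at this
    simpa using this.add_const y
  apply h2.congr
  intro s
  rw [← hformula s, hu_def]
  module
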